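/- Let D be a 2-connected rooted digraph. Then there exists an acyclic connected spanning subdigraph A of D which contains at least half of the arcs of D−r (the digraph obtained from D by deleting r). -/

import Mathlib

variable {V : Type*}

/-- Reachability by directed paths in a digraph given by its arc relation. -/
def Reaches (A : V → V → Prop) : V → V → Prop :=
  Relation.ReflTransGen A

/-- Reachability by directed paths avoiding the vertex set `S` (i.e. in `D − S`). -/
def ReachesAvoiding (A : V → V → Prop) (S : Set V) : V → V → Prop :=
  Relation.ReflTransGen (fun u v => A u v ∧ u ∉ S ∧ v ∉ S)

/-- A rooted digraph: loopless, the distinguished root `r` has indegree 0 and at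
least two outneighbours, and there is no arc `(x, y)` with `x ≠ r` and `y` an
outneighbour of `r`. -/
def IsRootedDigraph (A : V → V → Prop) (r : V) : Prop :=
  (∀ v, ¬ A v v) ∧
  (∀ v, ¬ A v r) ∧
  (∃ u v, u ≠ v ∧ A r u ∧ A r v) ∧
  ∀ x y, x ≠ r → A r y → ¬ A x y

/-- A rooted digraph is connected if every vertex is reachable from the root. -/
def RConnected (A : V → V → Prop) (r : V) : Prop :=
  ∀ v, Reaches A r v

/-- `S` is a cut of the rooted digraph: `S ⊆ V − r` and some vertex outside `S`
is the endpoint of no directed path from `r` in `D − S`. -/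
def IsCut (A : V → V → Prop) (r : V) (S : Set V) : Prop :=
  r ∉ S ∧ ∃ z ∉ S, ¬ ReachesAvoiding A S r z

/-- A rooted digraph is 2-connected if it has no cut of size at most 1. -/
def TwoConnected (A : V → V → Prop) (r : V) : Prop :=
  ∀ S : Set V, S.ncard ≤ 1 → ¬ IsCut A r S

/-- `T` is an outbranching of the rooted digraph `(A, r)`: a spanning directed
tree rooted at `r` (every vertex other than `r` has a unique in-arc in `T`, the
root has none, and every vertex is reachable from `r` in `T`). -/
def IsOutbranching (A : V → V → Prop) (r : V) (T : V → V → Prop) : Prop :=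
  (∀ u v, T u v → A u v) ∧
  (∀ v, v ≠ r → ∃! u, T u v) ∧
  (∀ u, ¬ T u r) ∧
  ∀ v, Reaches T r v

/-- The number of leaves (vertices of outdegree 0) of an outbranching `T`. -/
noncomputable def leafCount (T : V → V → Prop) : ℕ :=
  {v | ∀ u, ¬ T v u}.ncard

/-- The maximum number of leaves over all outbranchings. -/
noncomputable def maxleaf (A : V → V → Prop) (r : V) : ℕ :=
  sSup {n | ∃ T : V → V → Prop, IsOutbranching A r T ∧ n = leafCount T}

/-- Indegree of a vertex. -/
noncomputable def indeg (A : V → V → Prop) (v : V) : ℕ := {u | A u v}.ncard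

/-- Outdegree of a vertex. -/
noncomputable def outdeg (A : V → V → Prop) (v : V) : ℕ := {u | A v u}.ncard

/-- A vertex is nice if it has a simple in-arc, i.e. an in-arc not belonging to
a 2-circuit. -/
def Nice (A : V → V → Prop) (v : V) : Prop := ∃ u, A u v ∧ ¬ A v u

/-- A vertex is special if it has indegree at least 3 or a simple in-arc. -/
def Special (A : V → V → Prop) (v : V) : Prop := 3 ≤ indeg A v ∨ Nice A v

/-- A non-special vertex: distinct from `r`, with exactly two in-neighbours,
both of which are also its outneighbours. -/
def NonSpecial (A : V → V → Prop) (r : V) (v : V) : Prop :=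
  v ≠ r ∧ ∃ a b, a ≠ b ∧ {u | A u v} = {a, b} ∧ A v a ∧ A v b

/-- `x 0, …, x 4` is a bipath of length 4: the arcs of `D` incident to the
internal vertices `x 1, x 2, x 3` are exactly the arcs `(x i, x (i+1))` and
`(x (i+1), x i)` of the bipath. -/
def IsBipath4 (A : V → V → Prop) (x : Fin 5 → V) : Prop :=
  Function.Injective x ∧
  ∀ i : Fin 5, 0 < (i : ℕ) → (i : ℕ) < 4 →
    (∀ v, A (x i) v ↔ v = x (i - 1) ∨ v = x (i + 1)) ∧
    (∀ v, A v (x i) ↔ v = x (i - 1) ∨ v = x (i + 1))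

/-- A digraph is acyclic if it has no directed cycle. -/
def Acyclic (A : V → V → Prop) : Prop :=
  ∀ u v, A u v → ¬ Reaches A v u

/-- Reachability by directed paths staying inside the vertex set `S`. -/
def ReachIn (A : V → V → Prop) (S : Set V) : V → V → Prop :=
  Relation.ReflTransGen (fun a b => A a b ∧ a ∈ S ∧ b ∈ S)

lemma ReachIn.mono {A : V → V → Prop} {S T : Set V} (hST : S ⊆ T) {a b : V}
    (h : ReachIn A S a b) : ReachIn A T a b :=
  Relation.ReflTransGen.mono (fun _ _ h => ⟨h.1, hST h.2.1, hST h.2.2⟩) _ _ h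

lemma ReachIn.trans' {A : V → V → Prop} {S : Set V} {a b c : V}
    (h1 : ReachIn A S a b) (h2 : ReachIn A S b c) : ReachIn A S a c :=
  Relation.ReflTransGen.trans h1 h2

/-- Last-exit truncation: a walk in `S` to `v ≠ u` either avoids `u`, or has a
final exit arc `u → x` followed by a walk avoiding `u`. -/
lemma lastExit {A : V → V → Prop} {S : Set V} {u s v : V}
    (h : ReachIn A S s v) : v ≠ u →
    (s ≠ u ∧ ReachIn A (S \ {u}) s v) ∨
    (∃ x, A u x ∧ x ∈ S ∧ x ≠ u ∧ ReachIn A (S \ {u}) x v) := by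
  induction h with
  | refl => intro hv; exact Or.inl ⟨hv, Relation.ReflTransGen.refl⟩
  | @tail b c hsb hbc ih =>
    intro hc
    obtain ⟨hA, hbS, hcS⟩ := hbc
    by_cases hbu : b = u
    · exact Or.inr ⟨c, hbu ▸ hA, hcS, hc, Relation.ReflTransGen.refl⟩
    · rcases ih hbu with ⟨hsu, p⟩ | ⟨x, hx1, hx2, hx3, p⟩
      · exact Or.inl ⟨hsu, p.tail ⟨hA, ⟨hbS, hbu⟩, ⟨hcS, hc⟩⟩⟩
      · exact Or.inr ⟨x, hx1, hx2, hx3, p.tail ⟨hA, ⟨hbS, hbu⟩, ⟨hcS, hc⟩⟩⟩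

lemma firstHit_aux {A : V → V → Prop} {W C : Set V} {s v : V}
    (h : ReachIn A W s v) :
    (∃ c ∈ C, s ∉ C \ {c} ∧ ReachIn A (W \ (C \ {c})) s c) ∨
    ((s ∈ C → s = v) ∧ ReachIn A (W \ C) s v) := by
  induction h with
  | refl => exact Or.inr ⟨fun _ => rfl, Relation.ReflTransGen.refl⟩
  | @tail b c hsb hbc ih =>
    obtain ⟨hA, hbW, hcW⟩ := hbc
    rcases ih with hleft | ⟨hsb', hpath⟩
    · exact Or.inl hleft
    · by_cases hbC : b ∈ C
      · have hsb2 : s = b := by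
          rcases Relation.ReflTransGen.cases_tail hpath with h1 | ⟨m, _, hmb⟩
          · exact h1.symm
          · exact absurd hbC hmb.2.2.2
        refine Or.inl ⟨b, hbC, ?_, ?_⟩
        · rw [hsb2]; exact fun h => h.2 rfl
        · rw [hsb2]; exact Relation.ReflTransGen.refl
      · by_cases hcC : c ∈ C
        · refine Or.inl ⟨c, hcC, ?_, ?_⟩
          · intro hsC
            exact hbC ((hsb' hsC.1) ▸ hsC.1)
          · refine (hpath.mono ?_).tail ⟨hA, ⟨hbW, fun hb => hbC hb.1⟩, ⟨hcW, fun hc => hc.2 rfl⟩⟩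
            exact fun x hx => ⟨hx.1, fun hx2 => hx.2 hx2.1⟩
        · refine Or.inr ⟨?_, hpath.tail ⟨hA, ⟨hbW, hbC⟩, ⟨hcW, hcC⟩⟩⟩
          intro hsC
          exact absurd ((hsb' hsC) ▸ hsC) hbC

lemma firstHit {A : V → V → Prop} {W C : Set V} {s v : V}
    (h : ReachIn A W s v) (hv : v ∈ C) :
    ∃ c ∈ C, s ∉ C \ {c} ∧ ReachIn A (W \ (C \ {c})) s c := by
  rcases firstHit_aux h with hl | ⟨hs, hpath⟩
  · exact hl
  · rcases Relation.ReflTransGen.cases_tail hpath with h1 | ⟨m, _, hmv⟩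
    · refine ⟨v, hv, ?_, ?_⟩
      · rw [h1]; exact fun h => h.2 rfl
      · rw [h1]; exact Relation.ReflTransGen.refl
    · exact absurd hv hmv.2.2.2

lemma acyclic_of_lt {B : V → V → Prop} (m : V → ℕ) (hm : ∀ u v, B u v → m u < m v) :
    Acyclic B := by
  have mono : ∀ a b, Relation.ReflTransGen B a b → m a ≤ m b := by
    intro a b h
    induction h with
    | refl => exact le_rfl
    | tail _ h ih => exact ih.trans (hm _ _ h).le
  intro u v huv hr
  have h1 := mono _ _ hr
  have h2 := hm _ _ huv
  omega

lemma rconnected_of_lt {B : V → V → Prop} {r : V} (m : V → ℕ)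
    (h : ∀ v, v ≠ r → ∃ u, B u v ∧ (u = r ∨ m u < m v)) : RConnected B r := by
  have H : ∀ n v, m v < n → Relation.ReflTransGen B r v := by
    intro n
    induction n with
    | zero => intro v hv; omega
    | succ n ihn =>
      intro v hv
      by_cases hvr : v = r
      · exact hvr ▸ Relation.ReflTransGen.refl
      · obtain ⟨u, hB, hcase⟩ := h v hvr
        rcases hcase with rfl | hlt
        · exact Relation.ReflTransGen.single hB
        · exact (ihn u (by omega)).tail hB
  intro v
  exact H (m v + 1) v (Nat.lt_succ_self _)

lemma ext_path {A : V → V → Prop} {r : V} (hloop : ∀ v, ¬ A v v) (hnoin : ∀ v, ¬ A v r)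
    (S : Set V) {v : V} (h : ReachesAvoiding A S r v) :
    v ≠ r → ∃ nb, A r nb ∧ nb ∉ S ∧ ReachIn A ({x | x ≠ r} \ S) nb v := by
  induction h with
  | refl => intro hv; exact absurd rfl hv
  | @tail b c hrb hbc ih =>
    intro hc
    obtain ⟨hA, hbS, hcS⟩ := hbc
    by_cases hbr : b = r
    · exact ⟨c, hbr ▸ hA, hcS, Relation.ReflTransGen.refl⟩
    · obtain ⟨nb, h1, h2, h3⟩ := ih hbr
      have hcr : c ≠ r := fun h => hnoin b (h ▸ hA)
      exact ⟨nb, h1, h2, h3.tail ⟨hA, ⟨hbr, hbS⟩, ⟨hcr, hcS⟩⟩⟩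

lemma key_order [Fintype V] (A : V → V → Prop) :
    ∀ (n : ℕ) (W E1 E2 : Set V), W.ncard = n → E1 ⊆ W → E2 ⊆ W →
    (∀ v ∈ W, ¬ A v v) →
    (∀ v ∈ W, ∃ s ∈ E1, ReachIn A W s v) →
    (∀ v ∈ W, ∃ s ∈ E2, ReachIn A W s v) →
    (∀ u ∈ W, ∀ v ∈ W, v ≠ u → ∃ s ∈ E2, s ≠ u ∧ ReachIn A (W \ {u}) s v) →
    ∃ f : V → ℕ, Set.InjOn f W ∧ ∀ v ∈ W,
      ((v ∈ E1 ∨ ∃ w ∈ W, A w v ∧ f w < f v) ∧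
       (v ∈ E2 ∨ ∃ w ∈ W, A w v ∧ f v < f w)) := by
  classical
  intro n
  induction n using Nat.strong_induction_on with
  | _ n ih =>
  intro W E1 E2 hn hE1W hE2W hloop hA hB hC
  rcases W.eq_empty_or_nonempty with rfl | ⟨v0, hv0⟩
  · exact ⟨fun _ => 0, by simp [Set.InjOn], by simp⟩
  -- Peel existence: some u ∈ E2 can be removed keeping E1-reachability
  have hpeel : ∃ u ∈ E2, ∀ v ∈ W, v ≠ u → ∃ s ∈ E1, s ≠ u ∧ ReachIn A (W \ {u}) s v := by
    by_contra hnp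
    push_neg at hnp
    -- every u ∈ E2 dominates some vertex; build the choice function g
    have hstep : ∀ u, ∃ e, u ∈ E2 → (e ∈ E2 ∧ e ∈ W ∧ e ≠ u ∧
        ∀ t ∈ E1, t ≠ u → ¬ ReachIn A (W \ {u}) t e) := by
      intro u
      by_cases hu : u ∈ E2
      · obtain ⟨v, hvW, hvu, hv⟩ := hnp u hu
        obtain ⟨s, hsE2, hsu, hpath⟩ := hC u (hE2W hu) v hvW hvu
        refine ⟨s, fun _ => ⟨hsE2, hE2W hsE2, hsu, fun t htE1 htu hreach => ?_⟩⟩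
        exact hv t htE1 htu (hreach.trans' hpath)
      · exact ⟨u, fun h => absurd h hu⟩
    choose g hg using hstep
    have hgE2 : ∀ u ∈ E2, g u ∈ E2 := fun u hu => (hg u hu).1
    obtain ⟨s0, hs0, _⟩ := hB v0 hv0
    have hiter : ∀ m, g^[m] s0 ∈ E2 := by
      intro m
      induction m with
      | zero => exact hs0
      | succ m ihm => rw [Function.iterate_succ_apply']; exact hgE2 _ ihm
    obtain ⟨i, j, hij, heqij⟩ := Finite.exists_ne_map_eq_of_infinite (fun m : ℕ => g^[m] s0)
    obtain ⟨a, b, hab, heq2⟩ : ∃ a b, a < b ∧ g^[a] s0 = g^[b] s0 := by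
      rcases hij.lt_or_gt with h | h
      · exact ⟨i, j, h, heqij⟩
      · exact ⟨j, i, h, heqij.symm⟩
    set x := g^[a] s0 with hxdef
    have hper : g^[b - a] x = x := by
      rw [hxdef, ← Function.iterate_add_apply, show b - a + a = b by omega]
      exact heq2.symm
    set C : Set V := Set.range (fun m => g^[m] x) with hCdef
    have hCE2 : ∀ y ∈ C, y ∈ E2 := by
      rintro y ⟨m, rfl⟩
      simp only
      rw [hxdef, ← Function.iterate_add_apply]
      exact hiter (m + a)
    have hpred : ∀ y ∈ C, ∃ p ∈ C, g p = y := by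
      rintro y ⟨m, rfl⟩
      simp only
      cases m with
      | zero =>
        refine ⟨g^[b - a - 1] x, ⟨b - a - 1, rfl⟩, ?_⟩
        rw [← Function.iterate_succ_apply' g (b - a - 1) x,
          show (b - a - 1).succ = b - a by omega, hper]
        simp
      | succ m => exact ⟨g^[m] x, ⟨m, rfl⟩, (Function.iterate_succ_apply' g m x).symm⟩
    have hxC : x ∈ C := ⟨0, rfl⟩
    obtain ⟨s, hsE1, hpath⟩ := hA x (hE2W (hCE2 x hxC))
    obtain ⟨c, hcC, hsnot, hpath2⟩ := firstHit hpath hxC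
    obtain ⟨p, hpC, hgp⟩ := hpred c hcC
    obtain ⟨_, _, hgpne, hbad⟩ := hg p (hCE2 p hpC)
    rw [hgp] at hgpne hbad
    have hpmem : p ∈ C \ {c} := ⟨hpC, fun h => hgpne (by rw [h])⟩
    have hsp : s ≠ p := fun h => hsnot (h ▸ hpmem)
    refine hbad s hsE1 hsp (hpath2.mono ?_)
    intro y hy
    refine ⟨hy.1, fun hyp => ?_⟩
    have : y = p := hyp
    exact hy.2 (this ▸ hpmem)
  -- Peel u and recurse
  obtain ⟨u, huE2, hu⟩ := hpeel
  have huW : u ∈ W := hE2W huE2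
  have hncard : (W \ {u}).ncard < n := by
    rw [← hn]
    exact Set.ncard_diff_singleton_lt_of_mem huW W.toFinite
  obtain ⟨f', hinj', hgood'⟩ := ih (W \ {u}).ncard hncard (W \ {u}) (E1 \ {u})
    ((E2 \ {u}) ∪ {w | w ∈ W ∧ w ≠ u ∧ A u w}) rfl
    (fun x hx => ⟨hE1W hx.1, hx.2⟩)
    (by
      rintro x (⟨hxE2, hne⟩ | ⟨hxW, hne, _⟩)
      · exact ⟨hE2W hxE2, hne⟩
      · exact ⟨hxW, hne⟩)
    (fun v hv => hloop v hv.1)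
    (by
      intro v hv
      obtain ⟨s, hsE1, hsu, hp⟩ := hu v hv.1 hv.2
      exact ⟨s, ⟨hsE1, hsu⟩, hp⟩)
    (by
      intro v hv
      obtain ⟨s, hsE2, hsu, hp⟩ := hC u huW v hv.1 hv.2
      exact ⟨s, Or.inl ⟨hsE2, hsu⟩, hp⟩)
    (by
      intro w hw v hv hvw
      obtain ⟨s, hsE2, hsw, hp⟩ := hC w hw.1 v hv.1 hvw
      have hvu : v ≠ u := hv.2
      have hsubset : (W \ {w}) \ {u} ⊆ (W \ {u}) \ {w} :=
        fun y hy => ⟨⟨hy.1.1, hy.2⟩, hy.1.2⟩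
      rcases lastExit hp hvu with ⟨hsu, hp'⟩ | ⟨z, huz, hzS, hzu, hp'⟩
      · exact ⟨s, Or.inl ⟨hsE2, hsu⟩, hsw, hp'.mono hsubset⟩
      · exact ⟨z, Or.inr ⟨hzS.1, hzu, huz⟩, hzS.2, hp'.mono hsubset⟩)
  set M := Finset.univ.sup f' with hMdef
  have hfM : ∀ y : V, f' y ≤ M := fun y => Finset.le_sup (Finset.mem_univ y)
  obtain ⟨f, hfu, hfother⟩ : ∃ f : V → ℕ, f u = M + 1 ∧ ∀ y, y ≠ u → f y = f' y :=
    ⟨fun y => if y = u then M + 1 else f' y, by simp, fun y hy => by simp [hy]⟩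
  refine ⟨f, ?_, ?_⟩
  · intro y hy z hz hyz
    by_cases hyu : y = u <;> by_cases hzu : z = u
    · rw [hyu, hzu]
    · rw [hyu, hfu, hfother z hzu] at hyz
      exact absurd hyz.symm (by have := hfM z; omega)
    · rw [hzu, hfu, hfother y hyu] at hyz
      exact absurd hyz (by have := hfM y; omega)
    · rw [hfother y hyu, hfother z hzu] at hyz
      exact hinj' ⟨hy, hyu⟩ ⟨hz, hzu⟩ hyz
  · intro v hv
    by_cases hvu : v = u
    · subst hvu
      constructor
      · obtain ⟨s, hsE1, hp⟩ := hA v huW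
        rcases Relation.ReflTransGen.cases_tail hp with h1 | ⟨w, _, hw⟩
        · exact Or.inl (h1 ▸ hsE1)
        · have hwu : w ≠ v := fun h => hloop v huW (h ▸ hw.1)
          refine Or.inr ⟨w, hw.2.1, hw.1, ?_⟩
          rw [hfu, hfother w hwu]
          have := hfM w; omega
      · exact Or.inl huE2
    · have hv' : v ∈ W \ {u} := ⟨hv, hvu⟩
      obtain ⟨h1, h2⟩ := hgood' v hv'
      constructor
      · rcases h1 with h | ⟨w, hw, hAwv, hlt⟩
        · exact Or.inl h.1
        · refine Or.inr ⟨w, hw.1, hAwv, ?_⟩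
          rw [hfother w hw.2, hfother v hvu]
          exact hlt
      · rcases h2 with (h | h) | ⟨w, hw, hAwv, hlt⟩
        · exact Or.inl h.1
        · refine Or.inr ⟨u, huW, h.2.2, ?_⟩
          rw [hfu, hfother v hvu]
          have := hfM v; omega
        · refine Or.inr ⟨w, hw.1, hAwv, ?_⟩
          rw [hfother w hw.2, hfother v hvu]
          exact hlt

/-- Every 2-connected rooted digraph has an acyclic connected
spanning subdigraph containing at least half of the arcs of `D − r`. -/
theorem acyclic_spanning_subdigraph [Fintype V] (A : V → V → Prop) (r : V)
    (hD : IsRootedDigraph A r) (h2 : TwoConnected A r) :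
    ∃ B : V → V → Prop,
      (∀ u v, B u v → A u v) ∧ Acyclic B ∧ RConnected B r ∧
      ({p : V × V | A p.1 p.2 ∧ p.1 ≠ r ∧ p.2 ≠ r}.ncard : ℝ) / 2 ≤
        ({p : V × V | B p.1 p.2 ∧ p.1 ≠ r ∧ p.2 ≠ r}.ncard : ℝ) := by
  classical
  obtain ⟨hloopD, hnoin, -, -⟩ := hD
  have hreach : ∀ (S : Set V), S.ncard ≤ 1 → r ∉ S → ∀ z, z ∉ S → ReachesAvoiding A S r z := by
    intro S hS hr z hz
    by_contra h
    exact h2 S hS ⟨hr, z, hz, h⟩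
  have htgt : ∀ u v, A u v → v ≠ r := fun u v h hv => hnoin u (hv ▸ h)
  -- apply key_order with W = V \ {r}, E1 = E2 = out-neighbours of r
  obtain ⟨f, hinj, hgood⟩ := key_order A ({x : V | x ≠ r}).ncard {x : V | x ≠ r}
    {x : V | A r x} {x : V | A r x} rfl
    (fun x hx => htgt r x hx)
    (fun x hx => htgt r x hx)
    (fun v _ => hloopD v)
    (by
      intro v hv
      have h := hreach ∅ (by simp) (Set.notMem_empty r) v (Set.notMem_empty v)
      obtain ⟨nb, h1, _, h3⟩ := ext_path hloopD hnoin ∅ h hv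
      rw [Set.diff_empty] at h3
      exact ⟨nb, h1, h3⟩)
    (by
      intro v hv
      have h := hreach ∅ (by simp) (Set.notMem_empty r) v (Set.notMem_empty v)
      obtain ⟨nb, h1, _, h3⟩ := ext_path hloopD hnoin ∅ h hv
      rw [Set.diff_empty] at h3
      exact ⟨nb, h1, h3⟩)
    (by
      intro u hu v hv hvu
      have hru : r ∉ ({u} : Set V) := fun h => hu (Set.mem_singleton_iff.mp h).symm
      have h := hreach {u} (by simp) hru v (by simpa using hvu)
      obtain ⟨nb, h1, h2', h3⟩ := ext_path hloopD hnoin {u} h hv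
      exact ⟨nb, h1, by simpa using h2', h3⟩)
  set M := Finset.univ.sup f with hMdef
  have hfM : ∀ y : V, f y ≤ M := fun y => Finset.le_sup (Finset.mem_univ y)
  -- the two candidate subdigraphs
  have hacy1 : Acyclic (fun a b => A a b ∧ (a = r ∨ f a < f b)) := by
    refine acyclic_of_lt (fun v => if v = r then 0 else f v + 1) ?_
    rintro u v ⟨hA', hor⟩
    have hvr := htgt u v hA'
    show (if u = r then 0 else f u + 1) < (if v = r then 0 else f v + 1)
    rw [if_neg hvr]
    rcases hor with rfl | hlt
    · rw [if_pos rfl]; omega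
    · by_cases hur : u = r
      · rw [if_pos hur]; omega
      · rw [if_neg hur]; omega
  have hacy2 : Acyclic (fun a b => A a b ∧ (a = r ∨ f b < f a)) := by
    refine acyclic_of_lt (fun v => if v = r then 0 else M + 1 - f v) ?_
    rintro u v ⟨hA', hor⟩
    have hvr := htgt u v hA'
    have h1 := hfM u
    have h2 := hfM v
    show (if u = r then 0 else M + 1 - f u) < (if v = r then 0 else M + 1 - f v)
    rw [if_neg hvr]
    rcases hor with rfl | hlt
    · rw [if_pos rfl]; omega
    · by_cases hur : u = r
      · rw [if_pos hur]; omega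
      · rw [if_neg hur]; omega
  have hcon1 : RConnected (fun a b => A a b ∧ (a = r ∨ f a < f b)) r := by
    refine rconnected_of_lt (fun v => if v = r then 0 else f v + 1) ?_
    intro v hvr
    rcases (hgood v hvr).1 with h | ⟨w, hw, hAwv, hlt⟩
    · exact ⟨r, ⟨h, Or.inl rfl⟩, Or.inl rfl⟩
    · refine ⟨w, ⟨hAwv, Or.inr hlt⟩, Or.inr ?_⟩
      show (if w = r then 0 else f w + 1) < (if v = r then 0 else f v + 1)
      rw [if_neg hvr, if_neg hw]
      omega
  have hcon2 : RConnected (fun a b => A a b ∧ (a = r ∨ f b < f a)) r := by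
    refine rconnected_of_lt (fun v => if v = r then 0 else M + 1 - f v) ?_
    intro v hvr
    rcases (hgood v hvr).2 with h | ⟨w, hw, hAwv, hlt⟩
    · exact ⟨r, ⟨h, Or.inl rfl⟩, Or.inl rfl⟩
    · refine ⟨w, ⟨hAwv, Or.inr hlt⟩, Or.inr ?_⟩
      have h1 := hfM w
      show (if w = r then 0 else M + 1 - f w) < (if v = r then 0 else M + 1 - f v)
      rw [if_neg hvr, if_neg hw]
      omega
  -- counting
  set S0 : Set (V × V) := {p : V × V | A p.1 p.2 ∧ p.1 ≠ r ∧ p.2 ≠ r} with hS0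
  set S1 : Set (V × V) :=
    {p : V × V | (A p.1 p.2 ∧ (p.1 = r ∨ f p.1 < f p.2)) ∧ p.1 ≠ r ∧ p.2 ≠ r} with hS1
  set S2 : Set (V × V) :=
    {p : V × V | (A p.1 p.2 ∧ (p.1 = r ∨ f p.2 < f p.1)) ∧ p.1 ≠ r ∧ p.2 ≠ r} with hS2
  have hne : ∀ p : V × V, p ∈ S0 → f p.1 ≠ f p.2 := by
    rintro ⟨a, b⟩ ⟨hab, ha, hb⟩ heq
    have : a = b := hinj ha hb heq
    exact hloopD a (this ▸ hab)
  have hunion : S1 ∪ S2 = S0 := by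
    ext ⟨a, b⟩
    simp only [hS0, hS1, hS2, Set.mem_union, Set.mem_setOf_eq]
    constructor
    · rintro (⟨⟨h1, _⟩, h3, h4⟩ | ⟨⟨h1, _⟩, h3, h4⟩) <;> exact ⟨h1, h3, h4⟩
    · rintro ⟨h1, h3, h4⟩
      rcases lt_or_gt_of_ne (hne ⟨a, b⟩ ⟨h1, h3, h4⟩) with h | h
      · exact Or.inl ⟨⟨h1, Or.inr h⟩, h3, h4⟩
      · exact Or.inr ⟨⟨h1, Or.inr h⟩, h3, h4⟩
  have hdisj : Disjoint S1 S2 := by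
    rw [Set.disjoint_left]
    rintro ⟨a, b⟩ ⟨⟨_, h1⟩, h3, _⟩ ⟨⟨_, h2⟩, _, _⟩
    rcases h1 with h1 | h1
    · exact h3 h1
    · rcases h2 with h2 | h2
      · exact h3 h2
      · omega
  have hcards : S0.ncard = S1.ncard + S2.ncard := by
    rw [← hunion]
    exact Set.ncard_union_eq hdisj (Set.toFinite _) (Set.toFinite _)
  rcases le_total S1.ncard S2.ncard with hle | hle
  · refine ⟨fun a b => A a b ∧ (a = r ∨ f b < f a), fun u v h => h.1, hacy2, hcon2, ?_⟩
    show (S0.ncard : ℝ) / 2 ≤ (S2.ncard : ℝ)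
    have h1 : (S0.ncard : ℝ) ≤ 2 * S2.ncard := by
      have : S0.ncard ≤ 2 * S2.ncard := by omega
      exact_mod_cast this
    linarith
  · refine ⟨fun a b => A a b ∧ (a = r ∨ f a < f b), fun u v h => h.1, hacy1, hcon1, ?_⟩
    show (S0.ncard : ℝ) / 2 ≤ (S1.ncard : ℝ)
    have h1 : (S0.ncard : ℝ) ≤ 2 * S1.ncard := by
      have : S0.ncard ≤ 2 * S1.ncard := by omega
      exact_mod_cast this
    linarith
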